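/- An integral solution to the parent-set ILP (each node v selects exactly one parent set W_v) represents a directed acyclic graph if and only if it satisfies the cluster constraint Σ_{v∈C} [W_v ∩ C = ∅] ≥ 1 for every nonempty cluster C ⊆ V. -/

import Mathlib

open Finset

/-- An integral solution of the parent-set ILP (each node `v` selects exactly one parent
set `W v ⊆ V \ {v}`) represents a DAG iff it satisfies the cluster constraint
`∑_{v ∈ C} [W v ∩ C = ∅] ≥ 1` for every nonempty cluster `C ⊆ V`. -/
theorem integral_solution_dag_iff_cluster
    (V : Type*) [Fintype V] [DecidableEq V] (W : V → Finset V) (hW : ∀ v, v ∉ W v) :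
    (∀ v : V, ¬ Relation.TransGen (fun u w => u ∈ W w) v v) ↔
      (∀ C : Finset V, C.Nonempty →
        1 ≤ ∑ v ∈ C, (if W v ∩ C = ∅ then (1 : ℕ) else 0)) := by
  classical
  constructor
  · intro hacyc C hC
    by_contra hsum
    push_neg at hsum
    have hall : ∀ v ∈ C, (W v ∩ C).Nonempty := by
      intro v hv
      rw [Finset.nonempty_iff_ne_empty]
      intro he
      have h1 : 1 ≤ ∑ v ∈ C, (if W v ∩ C = ∅ then (1 : ℕ) else 0) := by
        have := Finset.single_le_sum
          (f := fun v => if W v ∩ C = ∅ then (1 : ℕ) else 0)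
          (fun i _ => Nat.zero_le _) hv
        simpa [he] using this
      omega
    set f : V → V := fun v => if h : (W v ∩ C).Nonempty then h.choose else v with hf
    have hfC : ∀ v ∈ C, f v ∈ C ∧ f v ∈ W v := by
      intro v hv
      have h := hall v hv
      have hc := h.choose_spec
      rw [Finset.mem_inter] at hc
      simp only [hf, dif_pos h]
      exact ⟨hc.2, hc.1⟩
    obtain ⟨v0, hv0⟩ := hC
    set g : ℕ → V := fun n => f^[n] v0 with hg
    have hgC : ∀ n, g n ∈ C := by
      intro n
      induction n with
      | zero => simpa [hg] using hv0
      | succ n ih =>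
        have := (hfC _ ih).1
        simpa [hg, Function.iterate_succ_apply'] using this
    have hstep : ∀ n, g (n + 1) ∈ W (g n) := by
      intro n
      have := (hfC _ (hgC n)).2
      simpa [hg, Function.iterate_succ_apply'] using this
    have hchain : ∀ i j, i < j →
        Relation.TransGen (fun u w => u ∈ W w) (g j) (g i) := by
      intro i j hij
      induction j with
      | zero => omega
      | succ j ih =>
        rcases Nat.lt_succ_iff_lt_or_eq.mp hij with h | h
        · exact Relation.TransGen.head (hstep j) (ih h)
        · subst h; exact Relation.TransGen.single (hstep i)
    obtain ⟨i, j, hne, heq⟩ := Finite.exists_ne_map_eq_of_infinite g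
    rcases Nat.lt_or_gt_of_ne hne with h | h
    · exact hacyc (g i) (heq ▸ hchain i j h)
    · exact hacyc (g j) (heq ▸ hchain j i h)
  · intro hcl v hcyc
    set r : V → V → Prop := fun u w => u ∈ W w with hr
    set C : Finset V :=
      Finset.univ.filter (fun u => Relation.TransGen r u v ∧ Relation.TransGen r v u)
      with hCdef
    have hvC : v ∈ C := by
      simp only [hCdef, Finset.mem_filter, Finset.mem_univ, true_and]
      exact ⟨hcyc, hcyc⟩
    have hsum := hcl C ⟨v, hvC⟩
    have hex : ∃ u ∈ C, W u ∩ C = ∅ := by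
      by_contra h
      push_neg at h
      have : ∑ v ∈ C, (if W v ∩ C = ∅ then (1 : ℕ) else 0) = 0 :=
        Finset.sum_eq_zero (fun u hu => by simp [(h u hu).ne_empty])
      omega
    obtain ⟨u, huC, hint⟩ := hex
    have huC' := huC
    simp only [hCdef, Finset.mem_filter] at huC'
    obtain ⟨-, huv, hvu⟩ := huC'
    obtain ⟨c, hvc, hcu⟩ := Relation.TransGen.tail'_iff.mp hvu
    have hvcT : Relation.TransGen r v c := by
      rcases (Relation.reflTransGen_iff_eq_or_transGen).mp hvc with h | h
      · exact h ▸ hcyc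
      · exact h
    have hcC : c ∈ C := by
      simp only [hCdef, Finset.mem_filter, Finset.mem_univ, true_and]
      exact ⟨Relation.TransGen.head hcu huv, hvcT⟩
    have : c ∈ W u ∩ C := Finset.mem_inter.mpr ⟨hcu, hcC⟩
    simp [hint] at this
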